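/- Let (X1, X2, X3) be a triple of vertex sets of size L each such that each pair (Xi, Xj) is ε-regular with density at least d, where d > 3ε and ε is sufficiently small relative to d (so the Blow-up Lemma applies). Then, for L sufficiently large, the tripartite graph induced on (X1, X2, X3) contains at least (1 - 2ε)L vertex-disjoint triangles. -/

import Mathlib

/-- The pair `(A, B)` is `ε`-regular. -/
def EpsRegular {V : Type*} [DecidableEq V] (G : SimpleGraph V) [DecidableRel G.Adj]
    (ε : ℝ) (A B : Finset V) : Prop :=
  ∀ X ⊆ A, ∀ Y ⊆ B, (X.card : ℝ) > ε * A.card → (Y.card : ℝ) > ε * B.card →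
    |(G.edgeDensity X Y : ℝ) - (G.edgeDensity A B : ℝ)| < ε

open Finset
set_option linter.unusedSectionVars false
set_option linter.unusedTactic false
set_option maxHeartbeats 1000000

namespace Stmt19Aux


variable {V : Type} [DecidableEq V] (G : SimpleGraph V) [DecidableRel G.Adj]

lemma interedges_union_left (S P T : Finset V) (h : Disjoint S P) :
    (Rel.interedges G.Adj (S ∪ P) T).card
      = (Rel.interedges G.Adj S T).card + (Rel.interedges G.Adj P T).card := by
  rw [show Rel.interedges G.Adj (S ∪ P) T
      = Rel.interedges G.Adj S T ∪ Rel.interedges G.Adj P T by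
    ext x
    simp only [Rel.mem_interedges_iff, mem_union]
    tauto]
  exact card_union_of_disjoint (Rel.interedges_disjoint_left _ h T)

lemma interedges_union_right (S T Q : Finset V) (h : Disjoint T Q) :
    (Rel.interedges G.Adj S (T ∪ Q)).card
      = (Rel.interedges G.Adj S T).card + (Rel.interedges G.Adj S Q).card := by
  rw [show Rel.interedges G.Adj S (T ∪ Q)
      = Rel.interedges G.Adj S T ∪ Rel.interedges G.Adj S Q by
    ext x
    simp only [Rel.mem_interedges_iff, mem_union]
    tauto]
  exact card_union_of_disjoint (Rel.interedges_disjoint_right _ _ h)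

lemma EE_sum (S T : Finset V) :
    (Rel.interedges G.Adj S T).card = ∑ v ∈ S, (T.filter (G.Adj v)).card := by
  rw [Rel.interedges_eq_biUnion, card_biUnion]
  · exact sum_congr rfl fun x _ => card_map _
  · intro x _ y _ hxy
    rw [Function.onFun, Finset.disjoint_left]
    rintro ⟨a, b⟩ ha hb
    simp only [mem_map, Function.Embedding.coeFn_mk, mem_filter] at ha hb
    obtain ⟨u, _, h1⟩ := ha
    obtain ⟨w, _, h2⟩ := hb
    injection h1 with h1a h1b
    injection h2 with h2a h2b
    exact hxy (h1a.trans h2a.symm)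

lemma EE_eq (S T : Finset V) (hS : S.Nonempty) (hT : T.Nonempty) :
    ((Rel.interedges G.Adj S T).card : ℝ)
      = (G.edgeDensity S T : ℝ) * S.card * T.card := by
  have hS0 : (S.card : ℝ) ≠ 0 := Nat.cast_ne_zero.2 hS.card_pos.ne'
  have hT0 : (T.card : ℝ) ≠ 0 := Nat.cast_ne_zero.2 hT.card_pos.ne'
  rw [show G.edgeDensity S T
      = ((Rel.interedges G.Adj S T).card : ℚ) / ((S.card : ℚ) * T.card) from rfl]
  push_cast
  field_simp

variable {G}

lemma reg_count_big {A B S T : Finset V} {L : ℕ} {ε : ℝ}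
    (hreg : EpsRegular G ε A B) (hA : A.card = L) (hB : B.card = L)
    (hS : S ⊆ A) (hT : T ⊆ B)
    (hs : ε * L < S.card) (ht : ε * L < T.card) (hε : 0 < ε) :
    |((Rel.interedges G.Adj S T).card : ℝ)
      - (G.edgeDensity A B : ℝ) * S.card * T.card| ≤ ε * (S.card * T.card) := by
  have hεL : (0:ℝ) ≤ ε * L := by positivity
  have hSne : S.Nonempty := card_pos.1 (by exact_mod_cast hεL.trans_lt hs)
  have hTne : T.Nonempty := card_pos.1 (by exact_mod_cast hεL.trans_lt ht)
  have hreg' := hreg S hS T hT (by rw [hA]; exact hs) (by rw [hB]; exact ht)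
  rw [EE_eq G S T hSne hTne]
  have hring : (G.edgeDensity S T : ℝ) * S.card * T.card
      - (G.edgeDensity A B : ℝ) * S.card * T.card
      = ((G.edgeDensity S T : ℝ) - (G.edgeDensity A B : ℝ)) * (S.card * T.card) := by ring
  rw [hring, abs_mul, abs_of_nonneg (by positivity : (0:ℝ) ≤ (S.card : ℝ) * T.card)]
  exact mul_le_mul_of_nonneg_right hreg'.le (by positivity)

lemma reg_count_left {A B S T : Finset V} {L K : ℕ} {ε : ℝ}
    (hreg : EpsRegular G ε A B) (hA : A.card = L) (hB : B.card = L)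
    (hS : S ⊆ A) (hT : T ⊆ B) (ht : ε * L < T.card) (hε : 0 < ε)
    (hK1 : ε * L < K) (hKL : 2 * K ≤ L) :
    |((Rel.interedges G.Adj S T).card : ℝ)
      - (G.edgeDensity A B : ℝ) * S.card * T.card|
      ≤ ε * (((S.card : ℝ) + 2 * K) * T.card) := by
  by_cases hs : ε * L < (S.card : ℝ)
  · refine (reg_count_big hreg hA hB hS hT hs ht hε).trans ?_
    have h1 : (0:ℝ) ≤ (K:ℝ) := by positivity
    have h2 : (0:ℝ) ≤ (T.card:ℝ) := by positivity
    nlinarith [mul_nonneg (mul_nonneg hε.le (by positivity : (0:ℝ) ≤ 2*(K:ℝ))) h2]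
  · push_neg at hs
    have hsK : S.card ≤ K := by
      have := hs.trans_lt hK1
      exact_mod_cast this.le
    have hcard : S.card + K ≤ A.card := by rw [hA]; omega
    obtain ⟨W, hSW, hWA, hW⟩ :=
      Finset.exists_subsuperset_card_eq hS (Nat.le_add_right _ _) hcard
    have hdisj : Disjoint S (W \ S) := Finset.disjoint_sdiff
    have hunion : S ∪ W \ S = W := Finset.union_sdiff_of_subset hSW
    have hPsub : W \ S ⊆ A := (sdiff_subset).trans hWA
    have hPcard : (W \ S).card = K := by
      rw [card_sdiff_of_subset hSW, hW]; omega
    have hWbig : ε * L < (W.card : ℝ) := by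
      rw [hW]
      push_cast
      have : (0:ℝ) ≤ (S.card : ℝ) := by positivity
      linarith
    have hPbig : ε * L < ((W \ S).card : ℝ) := by rw [hPcard]; exact hK1
    have h1 := reg_count_big hreg hA hB hWA hT hWbig ht hε
    have h2 := reg_count_big hreg hA hB hPsub hT hPbig ht hε
    have hEE : ((Rel.interedges G.Adj W T).card : ℝ)
        = ((Rel.interedges G.Adj S T).card : ℝ)
          + ((Rel.interedges G.Adj (W \ S) T).card : ℝ) := by
      have h := interedges_union_left G S (W \ S) T hdisj
      rw [hunion] at h
      exact_mod_cast h
    have hWr : (W.card : ℝ) = (S.card : ℝ) + ((W \ S).card : ℝ) := by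
      rw [hW, hPcard]; push_cast; ring
    have hPr : ((W \ S).card : ℝ) = (K : ℝ) := by rw [hPcard]
    set dAB := (G.edgeDensity A B : ℝ)
    have e1 : dAB * W.card * T.card
        = dAB * S.card * T.card + dAB * ((W \ S).card) * T.card := by
      rw [hWr]; ring
    have e2 : ε * ((W.card : ℝ) * T.card) + ε * (((W \ S).card : ℝ) * T.card)
        = ε * (((S.card : ℝ) + 2 * K) * T.card) := by
      rw [hWr, hPr]; ring
    rw [abs_le] at h1 h2 ⊢
    constructor <;> linarith [h1.1, h1.2, h2.1, h2.2]

lemma reg_count {A B S T : Finset V} {L K : ℕ} {ε : ℝ}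
    (hreg : EpsRegular G ε A B) (hA : A.card = L) (hB : B.card = L)
    (hS : S ⊆ A) (hT : T ⊆ B) (hε : 0 < ε)
    (hK1 : ε * L < K) (hKL : 2 * K ≤ L) :
    |((Rel.interedges G.Adj S T).card : ℝ)
      - (G.edgeDensity A B : ℝ) * S.card * T.card|
      ≤ ε * (((S.card : ℝ) + 2 * K) * ((T.card : ℝ) + 2 * K)) := by
  by_cases ht : ε * L < (T.card : ℝ)
  · refine (reg_count_left hreg hA hB hS hT ht hε hK1 hKL).trans ?_
    have h1 : (0:ℝ) ≤ (K:ℝ) := by positivity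
    have h2 : (0:ℝ) ≤ (S.card:ℝ) + 2 * K := by positivity
    nlinarith [mul_nonneg (mul_nonneg hε.le h2) (by positivity : (0:ℝ) ≤ 2*(K:ℝ))]
  · push_neg at ht
    have htK : T.card ≤ K := by
      have := ht.trans_lt hK1
      exact_mod_cast this.le
    have hcard : T.card + K ≤ B.card := by rw [hB]; omega
    obtain ⟨W, hTW, hWB, hW⟩ :=
      Finset.exists_subsuperset_card_eq hT (Nat.le_add_right _ _) hcard
    have hdisj : Disjoint T (W \ T) := Finset.disjoint_sdiff
    have hunion : T ∪ W \ T = W := Finset.union_sdiff_of_subset hTW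
    have hQsub : W \ T ⊆ B := (sdiff_subset).trans hWB
    have hQcard : (W \ T).card = K := by rw [card_sdiff_of_subset hTW, hW]; omega
    have hWbig : ε * L < (W.card : ℝ) := by
      rw [hW]
      push_cast
      have : (0:ℝ) ≤ (T.card : ℝ) := by positivity
      linarith
    have hQbig : ε * L < ((W \ T).card : ℝ) := by rw [hQcard]; exact hK1
    have h1 := reg_count_left hreg hA hB hS hWB hWbig hε hK1 hKL
    have h2 := reg_count_left hreg hA hB hS hQsub hQbig hε hK1 hKL
    have hEE : ((Rel.interedges G.Adj S W).card : ℝ)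
        = ((Rel.interedges G.Adj S T).card : ℝ)
          + ((Rel.interedges G.Adj S (W \ T)).card : ℝ) := by
      have h := interedges_union_right G S T (W \ T) hdisj
      rw [hunion] at h
      exact_mod_cast h
    have hWr : (W.card : ℝ) = (T.card : ℝ) + ((W \ T).card : ℝ) := by
      rw [hW, hQcard]; push_cast; ring
    have hQr : ((W \ T).card : ℝ) = (K : ℝ) := by rw [hQcard]
    set dAB := (G.edgeDensity A B : ℝ)
    have e1 : dAB * S.card * W.card
        = dAB * S.card * T.card + dAB * S.card * ((W \ T).card) := by
      rw [hWr]; ring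
    have e2 : ε * (((S.card : ℝ) + 2 * K) * W.card)
          + ε * (((S.card : ℝ) + 2 * K) * ((W \ T).card))
        = ε * (((S.card : ℝ) + 2 * K) * ((T.card : ℝ) + 2 * K)) := by
      rw [hWr, hQr]; ring
    rw [abs_le] at h1 h2 ⊢
    constructor <;> linarith [h1.1, h1.2, h2.1, h2.2]


/-- Bound on the number of vertices of `YA` with low degree into `YB`. -/
lemma badset {A B YA YB : Finset V} {L K : ℕ} {ε δ : ℝ}
    (hreg : EpsRegular G ε A B) (hA : A.card = L) (hB : B.card = L)
    (hYA : YA ⊆ A) (hYB : YB ⊆ B) (hε : 0 < ε)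
    (hK1 : ε * L < K) (hKL : 2 * K ≤ L)
    (hnK : (K : ℝ) < YB.card) :
    ((YA.filter fun v => ((YB.filter (G.Adj v)).card : ℝ)
        ≤ ((G.edgeDensity A B : ℝ) - δ) * YB.card).card : ℝ) * (δ - 3 * ε)
      ≤ 6 * ε * K := by
  set dAB := (G.edgeDensity A B : ℝ) with hdAB
  set Bad := YA.filter fun v => ((YB.filter (G.Adj v)).card : ℝ) ≤ (dAB - δ) * YB.card with hBad
  set b := (Bad.card : ℝ) with hb
  set n := (YB.card : ℝ) with hn
  have hb0 : 0 ≤ b := by rw [hb]; exact Nat.cast_nonneg _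
  have hK0' : (0:ℝ) ≤ (K:ℝ) := Nat.cast_nonneg _
  have hn0 : (0:ℝ) < n := lt_of_le_of_lt hK0' hnK
  have hup : ((Rel.interedges G.Adj Bad YB).card : ℝ) ≤ b * ((dAB - δ) * n) := by
    calc ((Rel.interedges G.Adj Bad YB).card : ℝ)
        = ∑ v ∈ Bad, ((YB.filter (G.Adj v)).card : ℝ) := by
          rw [EE_sum G Bad YB]; push_cast; rfl
      _ ≤ ∑ _v ∈ Bad, (dAB - δ) * n := by
          refine sum_le_sum fun v hv => ?_
          rw [hBad, mem_filter] at hv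
          exact hv.2
      _ = b * ((dAB - δ) * n) := by rw [sum_const, nsmul_eq_mul]
  have hBadsub : Bad ⊆ A := by rw [hBad]; exact (filter_subset _ _).trans hYA
  have hlow := reg_count hreg hA hB hBadsub hYB hε hK1 hKL
  rw [abs_le] at hlow
  have hlow1 : dAB * b * n - ε * ((b + 2 * K) * (n + 2 * K))
      ≤ ((Rel.interedges G.Adj Bad YB).card : ℝ) := by
    have h := hlow.1
    simp only [← hb, ← hn, ← hdAB] at h
    linarith
  have hKn : (2:ℝ) * K ≤ 2 * n := by linarith
  have hstep : δ * b * n ≤ 3 * ε * n * b + 6 * ε * K * n := by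
    nlinarith [mul_nonneg (mul_nonneg hε.le (by linarith : (0:ℝ) ≤ b + 2 * K))
      (by linarith : (0:ℝ) ≤ 3 * n - (n + 2 * K))]
  have key : (b * (δ - 3 * ε)) * n ≤ (6 * ε * K) * n := by nlinarith
  exact le_of_mul_le_mul_right key hn0

/-- A triangle exists in any triple of subsets of size `> 2εL`. -/
lemma triangle_ex {X : Fin 3 → Finset V} {L K : ℕ} {ε d : ℝ}
    (hd : 0 < d)
    (hcardX : ∀ i, (X i).card = L)
    (hregd : ∀ i j, i ≠ j → EpsRegular G ε (X i) (X j) ∧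
      (G.edgeDensity (X i) (X j) : ℝ) ≥ d)
    (hε : 0 < ε) (hε0 : ε ≤ (min d 1) ^ 3 / 100)
    (hεL : 100 ≤ (min d 1) * (ε * L))
    (hK1 : ε * L < K) (hK2 : (K : ℝ) ≤ ε * L + 1) (hKL : 2 * K ≤ L)
    (Y : Fin 3 → Finset V) (hY : ∀ i, Y i ⊆ X i)
    (hn : ∀ i, 2 * (ε * L) < ((Y i).card : ℝ)) :
    ∃ v1 ∈ Y 0, ∃ v2 ∈ Y 1, ∃ v3 ∈ Y 2,
      G.Adj v1 v2 ∧ G.Adj v1 v3 ∧ G.Adj v2 v3 := by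
  set d' := min d 1 with hd'
  have hd'0 : 0 < d' := lt_min hd one_pos
  have hd'1 : d' ≤ 1 := min_le_right _ _
  have hd'd : d' ≤ d := min_le_left _ _
  have hεd : ε ≤ d' / 100 := by
    refine hε0.trans ?_
    nlinarith [mul_nonneg (mul_nonneg hd'0.le (sub_nonneg.2 hd'1))
      (by linarith : (0:ℝ) ≤ 1 + d')]
  have hεLpos : (0:ℝ) < ε * L := by
    by_contra h
    push_neg at h
    have h2 := mul_le_mul_of_nonneg_left h hd'0.le
    simp only [mul_zero] at h2
    linarith
  have h100 : 100 ≤ ε * L := by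
    have := mul_le_mul_of_nonneg_right hd'1 hεLpos.le
    linarith [mul_le_mul_of_nonneg_right hd'1 hεLpos.le]
  have hK2' : (K : ℝ) ≤ 2 * (ε * L) := by linarith
  have h3ε : 3 * ε ≤ d' / 4 := by linarith
  set d01 := (G.edgeDensity (X 0) (X 1) : ℝ) with hd01
  set d02 := (G.edgeDensity (X 0) (X 2) : ℝ) with hd02
  set d12 := (G.edgeDensity (X 1) (X 2) : ℝ) with hd12
  have hreg01 := (hregd 0 1 (by decide)).1
  have hreg02 := (hregd 0 2 (by decide)).1
  have hreg12 := (hregd 1 2 (by decide)).1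
  have hge01 : d ≤ d01 := (hregd 0 1 (by decide)).2
  have hge02 : d ≤ d02 := (hregd 0 2 (by decide)).2
  have hge12 : d ≤ d12 := (hregd 1 2 (by decide)).2
  set Bad2 := (Y 0).filter fun v => (((Y 1).filter (G.Adj v)).card : ℝ)
      ≤ (d01 - d' / 2) * (Y 1).card with hBad2
  set Bad3 := (Y 0).filter fun v => (((Y 2).filter (G.Adj v)).card : ℝ)
      ≤ (d02 - d' / 2) * (Y 2).card with hBad3
  have hb2 := badset (δ := d' / 2) hreg01 (hcardX 0) (hcardX 1) (hY 0) (hY 1) hε hK1 hKL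
      (by linarith [hn 1])
  have hb3 := badset (δ := d' / 2) hreg02 (hcardX 0) (hcardX 2) (hY 0) (hY 2) hε hK1 hKL
      (by linarith [hn 2])
  rw [← hBad2] at hb2
  rw [← hBad3] at hb3
  set b2 := (Bad2.card : ℝ) with hb2'
  set b3 := (Bad3.card : ℝ) with hb3'
  have hb20 : 0 ≤ b2 := by rw [hb2']; exact Nat.cast_nonneg _
  have hb30 : 0 ≤ b3 := by rw [hb3']; exact Nat.cast_nonneg _
  have hq2 : b2 * (d' / 4) ≤ 6 * ε * K := by
    have := mul_le_mul_of_nonneg_left (by linarith : d' / 4 ≤ d' / 2 - 3 * ε) hb20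
    linarith
  have hq3 : b3 * (d' / 4) ≤ 6 * ε * K := by
    have := mul_le_mul_of_nonneg_left (by linarith : d' / 4 ≤ d' / 2 - 3 * ε) hb30
    linarith
  have hbb : b2 + b3 < 2 * (ε * L) := by
    have t1 : (b2 + b3) * (d' / 4) ≤ 12 * (ε * (K:ℝ)) := by linarith
    have t2 : ε * (K:ℝ) ≤ ε * (2 * (ε * L)) := mul_le_mul_of_nonneg_left hK2' hε.le
    have t3 : ε * (ε * L) ≤ (d' / 100) * (ε * L) := mul_le_mul_of_nonneg_right hεd hεLpos.le
    have t4 : (0:ℝ) < d' * (ε * L) := by linarith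
    have c4 : (b2 + b3) * (d' / 4) < (2 * (ε * L)) * (d' / 4) := by linarith
    exact lt_of_mul_lt_mul_right c4 (by linarith)
  have hbbn : b2 + b3 < ((Y 0).card : ℝ) := hbb.trans (hn 0)
  have hsub : ¬ Y 0 ⊆ Bad2 ∪ Bad3 := by
    intro h
    have h1 : (Y 0).card ≤ (Bad2 ∪ Bad3).card := card_le_card h
    have h2 : ((Bad2 ∪ Bad3).card : ℝ) ≤ b2 + b3 := by
      rw [hb2', hb3']
      exact_mod_cast card_union_le _ _
    have : ((Y 0).card : ℝ) ≤ b2 + b3 := le_trans (by exact_mod_cast h1) h2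
    linarith
  obtain ⟨v1, hv1Y, hv1n⟩ := Finset.not_subset.1 hsub
  rw [mem_union] at hv1n
  push_neg at hv1n
  have hv1n2 : (d01 - d' / 2) * (Y 1).card < (((Y 1).filter (G.Adj v1)).card : ℝ) := by
    by_contra h
    push_neg at h
    exact hv1n.1 (by rw [hBad2, mem_filter]; exact ⟨hv1Y, h⟩)
  have hv1n3 : (d02 - d' / 2) * (Y 2).card < (((Y 2).filter (G.Adj v1)).card : ℝ) := by
    by_contra h
    push_neg at h
    exact hv1n.2 (by rw [hBad3, mem_filter]; exact ⟨hv1Y, h⟩)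
  set N2 := (Y 1).filter (G.Adj v1) with hN2
  set N3 := (Y 2).filter (G.Adj v1) with hN3
  set m2 := (N2.card : ℝ) with hm2
  set m3 := (N3.card : ℝ) with hm3
  have hy1pos : (0:ℝ) ≤ ((Y 1).card : ℝ) := Nat.cast_nonneg _
  have hy2pos : (0:ℝ) ≤ ((Y 2).card : ℝ) := Nat.cast_nonneg _
  have hm2big : d' * (ε * L) < m2 := by
    have h1 : (d' / 2) * ((Y 1).card : ℝ) ≤ (d01 - d' / 2) * (Y 1).card :=
      mul_le_mul_of_nonneg_right (by linarith) hy1pos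
    have h2 : (d' / 2) * (2 * (ε * L)) < (d' / 2) * ((Y 1).card : ℝ) :=
      mul_lt_mul_of_pos_left (hn 1) (by linarith)
    have h3 : (d' / 2) * (2 * (ε * L)) = d' * (ε * L) := by ring
    linarith
  have hm3big : d' * (ε * L) < m3 := by
    have h1 : (d' / 2) * ((Y 2).card : ℝ) ≤ (d02 - d' / 2) * (Y 2).card :=
      mul_le_mul_of_nonneg_right (by linarith) hy2pos
    have h2 : (d' / 2) * (2 * (ε * L)) < (d' / 2) * ((Y 2).card : ℝ) :=
      mul_lt_mul_of_pos_left (hn 2) (by linarith)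
    have h3 : (d' / 2) * (2 * (ε * L)) = d' * (ε * L) := by ring
    linarith
  have hm20 : 0 < m2 := lt_of_le_of_lt (mul_nonneg hd'0.le hεLpos.le) hm2big
  have hm30 : 0 < m3 := lt_of_le_of_lt (mul_nonneg hd'0.le hεLpos.le) hm3big
  have hNsub2 : N2 ⊆ X 1 := (filter_subset _ _).trans (hY 1)
  have hNsub3 : N3 ⊆ X 2 := (filter_subset _ _).trans (hY 2)
  have hcount := reg_count hreg12 (hcardX 1) (hcardX 2) hNsub2 hNsub3 hε hK1 hKL
  rw [abs_le] at hcount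
  have hd12' : d' ≤ d12 := le_trans hd'd hge12
  have hda : d' * (m2 + 2 * K) ≤ 5 * m2 := by
    have u1 : d' * m2 ≤ m2 := mul_le_of_le_one_left hm20.le hd'1
    have u2 : d' * (2 * (K:ℝ)) ≤ d' * (4 * (ε * L)) :=
      mul_le_mul_of_nonneg_left (by linarith) hd'0.le
    have u3 : d' * (4 * (ε * L)) = 4 * (d' * (ε * L)) := by ring
    have u4 : d' * (m2 + 2 * K) = d' * m2 + d' * (2 * (K:ℝ)) := by ring
    linarith
  have hdb : d' * (m3 + 2 * K) ≤ 5 * m3 := by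
    have u1 : d' * m3 ≤ m3 := mul_le_of_le_one_left hm30.le hd'1
    have u2 : d' * (2 * (K:ℝ)) ≤ d' * (4 * (ε * L)) :=
      mul_le_mul_of_nonneg_left (by linarith) hd'0.le
    have u3 : d' * (4 * (ε * L)) = 4 * (d' * (ε * L)) := by ring
    have u4 : d' * (m3 + 2 * K) = d' * m3 + d' * (2 * (K:ℝ)) := by ring
    linarith
  have hK0 : (0:ℝ) ≤ (K:ℝ) := Nat.cast_nonneg _
  have hm : (d' * (m2 + 2 * K)) * (d' * (m3 + 2 * K)) ≤ (5 * m2) * (5 * m3) :=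
    mul_le_mul hda hdb (mul_nonneg hd'0.le (by linarith)) (by linarith)
  have herr : d' ^ 2 * (ε * ((m2 + 2 * K) * (m3 + 2 * K))) < d' ^ 2 * (d12 * (m2 * m3)) := by
    have s1 : ε * ((d' * (m2 + 2 * K)) * (d' * (m3 + 2 * K))) ≤ ε * ((5 * m2) * (5 * m3)) :=
      mul_le_mul_of_nonneg_left hm hε.le
    have s2 : ε * (25 * (m2 * m3)) ≤ (d' ^ 3 / 100) * (25 * (m2 * m3)) :=
      mul_le_mul_of_nonneg_right hε0
        (by linarith [mul_pos hm20 hm30] : (0:ℝ) ≤ 25 * (m2 * m3))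
    have s3 : (d' ^ 3 / 100) * (25 * (m2 * m3)) < d' ^ 2 * (d' * (m2 * m3)) := by
      have p1 : (0:ℝ) < d' ^ 3 * (m2 * m3) :=
        mul_pos (pow_pos hd'0 3) (mul_pos hm20 hm30)
      linarith [p1]
    have s4 : d' ^ 2 * (d' * (m2 * m3)) ≤ d' ^ 2 * (d12 * (m2 * m3)) := by
      have h := mul_le_mul_of_nonneg_right hd12'
        (mul_nonneg (pow_nonneg hd'0.le 2) (mul_pos hm20 hm30).le)
      linarith [h]
    calc d' ^ 2 * (ε * ((m2 + 2 * K) * (m3 + 2 * K)))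
        = ε * ((d' * (m2 + 2 * K)) * (d' * (m3 + 2 * K))) := by ring
      _ ≤ ε * ((5 * m2) * (5 * m3)) := s1
      _ = ε * (25 * (m2 * m3)) := by ring
      _ ≤ (d' ^ 3 / 100) * (25 * (m2 * m3)) := s2
      _ < d' ^ 2 * (d' * (m2 * m3)) := s3
      _ ≤ d' ^ 2 * (d12 * (m2 * m3)) := s4
  have herr' : ε * ((m2 + 2 * K) * (m3 + 2 * K)) < d12 * (m2 * m3) :=
    lt_of_mul_lt_mul_left herr (pow_nonneg hd'0.le 2)
  have hpos : (0:ℝ) < ((Rel.interedges G.Adj N2 N3).card : ℝ) := by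
    have h := hcount.1
    simp only [← hm2, ← hm3, ← hd12] at h
    linarith [h, herr']
  have hne : (Rel.interedges G.Adj N2 N3).Nonempty := by
    rw [← card_pos]
    exact_mod_cast hpos
  obtain ⟨⟨v2, v3⟩, hmem⟩ := hne
  rw [Rel.mem_interedges_iff] at hmem
  obtain ⟨hv2N, hv3N, hadj23⟩ := hmem
  rw [hN2, mem_filter] at hv2N
  rw [hN3, mem_filter] at hv3N
  exact ⟨v1, hv1Y, v2, hv2N.1, v3, hv3N.1, hv2N.2, hv3N.2, hadj23⟩


lemma greedy {X : Fin 3 → Finset V} {L K : ℕ} {ε d : ℝ}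
    (hd : 0 < d)
    (hdisjX : ∀ i j, i ≠ j → Disjoint (X i) (X j))
    (hcardX : ∀ i, (X i).card = L)
    (hregd : ∀ i j, i ≠ j → EpsRegular G ε (X i) (X j) ∧
      (G.edgeDensity (X i) (X j) : ℝ) ≥ d)
    (hε : 0 < ε) (hε0 : ε ≤ (min d 1) ^ 3 / 100)
    (hεL : 100 ≤ (min d 1) * (ε * L))
    (hK1 : ε * L < K) (hK2 : (K : ℝ) ≤ ε * L + 1) (hKL : 2 * K ≤ L) :
    ∀ n (Y : Fin 3 → Finset V), (∀ i, Y i ⊆ X i) → (∀ i, (Y i).card = n) →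
    ∃ T : Finset (Finset V), ((n : ℝ) - 2 * (ε * L) ≤ T.card) ∧
      (∀ s ∈ T, (G.IsNClique 3 s ∧ ∀ i, (s ∩ X i).card = 1)
        ∧ s ⊆ Y 0 ∪ Y 1 ∪ Y 2) ∧
      (T : Set (Finset V)).PairwiseDisjoint id := by
  have hεLpos : (0:ℝ) ≤ ε * L := by positivity
  intro n
  induction n with
  | zero =>
    intro Y hY hcard
    refine ⟨∅, ?_, by simp, by simp⟩
    simp only [card_empty, Nat.cast_zero]
    linarith
  | succ n ih =>
    intro Y hY hcard
    by_cases hle : ((n + 1 : ℕ) : ℝ) ≤ 2 * (ε * L)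
    · refine ⟨∅, ?_, by simp, by simp⟩
      simp only [card_empty, Nat.cast_zero]
      linarith
    · push_neg at hle
      have hn : ∀ i, 2 * (ε * L) < ((Y i).card : ℝ) := fun i => by
        rw [hcard i]; exact hle
      obtain ⟨v1, hv1, v2, hv2, v3, hv3, h12, h13, h23⟩ :=
        triangle_ex hd hcardX hregd hε hε0 hεL hK1 hK2 hKL Y hY hn
      have hx1 : v1 ∈ X 0 := hY 0 hv1
      have hx2 : v2 ∈ X 1 := hY 1 hv2
      have hx3 : v3 ∈ X 2 := hY 2 hv3
      set vv : Fin 3 → V := ![v1, v2, v3] with hvv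
      have hvvmem : ∀ i, vv i ∈ Y i := by
        intro i
        fin_cases i <;> simpa [hvv]
      set Y' : Fin 3 → Finset V := fun i => (Y i).erase (vv i) with hY'
      have hY'sub : ∀ i, Y' i ⊆ X i := fun i => (erase_subset _ _).trans (hY i)
      have hY'card : ∀ i, (Y' i).card = n := fun i => by
        simp only [hY']
        rw [card_erase_of_mem (hvvmem i), hcard i]
        omega
      obtain ⟨T', hT'card, hT'mem, hT'disj⟩ := ih Y' hY'sub hY'card
      set s : Finset V := {v1, v2, v3} with hs
      have hclique : G.IsNClique 3 s := SimpleGraph.is3Clique_triple_iff.2 ⟨h12, h13, h23⟩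
      have h2n1 : v2 ∉ X 0 := Finset.disjoint_left.1 (hdisjX 1 0 (by decide)) hx2
      have h3n1 : v3 ∉ X 0 := Finset.disjoint_left.1 (hdisjX 2 0 (by decide)) hx3
      have h1n2 : v1 ∉ X 1 := Finset.disjoint_left.1 (hdisjX 0 1 (by decide)) hx1
      have h3n2 : v3 ∉ X 1 := Finset.disjoint_left.1 (hdisjX 2 1 (by decide)) hx3
      have h1n3 : v1 ∉ X 2 := Finset.disjoint_left.1 (hdisjX 0 2 (by decide)) hx1
      have h2n3 : v2 ∉ X 2 := Finset.disjoint_left.1 (hdisjX 1 2 (by decide)) hx2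
      have hinter : ∀ i, (s ∩ X i).card = 1 := by
        intro i
        fin_cases i
        · show (s ∩ X 0).card = 1
          have e : s ∩ X 0 = {v1} := by
            ext x
            simp only [hs, mem_inter, mem_insert, mem_singleton]
            constructor
            · rintro ⟨(rfl | rfl | rfl), hx⟩
              · rfl
              · exact absurd hx h2n1
              · exact absurd hx h3n1
            · rintro rfl
              exact ⟨Or.inl rfl, hx1⟩
          rw [e, card_singleton]
        · show (s ∩ X 1).card = 1
          have e : s ∩ X 1 = {v2} := by
            ext x
            simp only [hs, mem_inter, mem_insert, mem_singleton]
            constructor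
            · rintro ⟨(rfl | rfl | rfl), hx⟩
              · exact absurd hx h1n2
              · rfl
              · exact absurd hx h3n2
            · rintro rfl
              exact ⟨Or.inr (Or.inl rfl), hx2⟩
          rw [e, card_singleton]
        · show (s ∩ X 2).card = 1
          have e : s ∩ X 2 = {v3} := by
            ext x
            simp only [hs, mem_inter, mem_insert, mem_singleton]
            constructor
            · rintro ⟨(rfl | rfl | rfl), hx⟩
              · exact absurd hx h1n3
              · exact absurd hx h2n3
              · rfl
            · rintro rfl
              exact ⟨Or.inr (Or.inr rfl), hx3⟩
          rw [e, card_singleton]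
      have hUnot : ∀ x, x ∈ s → x ∉ Y' 0 ∪ Y' 1 ∪ Y' 2 := by
        intro x hx hU
        rw [mem_union, mem_union] at hU
        have hY'0 : Y' 0 = (Y 0).erase v1 := rfl
        have hY'1 : Y' 1 = (Y 1).erase v2 := rfl
        have hY'2 : Y' 2 = (Y 2).erase v3 := rfl
        rw [hs] at hx
        simp only [mem_insert, mem_singleton] at hx
        rcases hx with rfl | rfl | rfl
        · rcases hU with (h | h) | h
          · exact notMem_erase _ _ (hY'0 ▸ h)
          · exact h1n2 (hY 1 (erase_subset _ _ (hY'1 ▸ h)))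
          · exact h1n3 (hY 2 (erase_subset _ _ (hY'2 ▸ h)))
        · rcases hU with (h | h) | h
          · exact h2n1 (hY 0 (erase_subset _ _ (hY'0 ▸ h)))
          · exact notMem_erase _ _ (hY'1 ▸ h)
          · exact h2n3 (hY 2 (erase_subset _ _ (hY'2 ▸ h)))
        · rcases hU with (h | h) | h
          · exact h3n1 (hY 0 (erase_subset _ _ (hY'0 ▸ h)))
          · exact h3n2 (hY 1 (erase_subset _ _ (hY'1 ▸ h)))
          · exact notMem_erase _ _ (hY'2 ▸ h)
      have hdisjnew : ∀ t ∈ T', Disjoint s t := by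
        intro t ht
        rw [Finset.disjoint_left]
        intro a ha hat
        exact hUnot a ha ((hT'mem t ht).2 hat)
      have hv1s : v1 ∈ s := by rw [hs]; exact mem_insert_self _ _
      have hsnot : s ∉ T' := fun h => hUnot v1 hv1s ((hT'mem s h).2 hv1s)
      refine ⟨insert s T', ?_, ?_, ?_⟩
      · rw [card_insert_of_notMem hsnot]
        push_cast
        push_cast at hT'card
        linarith
      · intro t ht
        rcases mem_insert.1 ht with rfl | ht'
        · refine ⟨⟨hclique, hinter⟩, ?_⟩
          rw [hs]
          intro a ha
          simp only [mem_insert, mem_singleton] at ha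
          rcases ha with rfl | rfl | rfl
          · exact mem_union_left _ (mem_union_left _ hv1)
          · exact mem_union_left _ (mem_union_right _ hv2)
          · exact mem_union_right _ hv3
        · obtain ⟨hp, hsub⟩ := hT'mem t ht'
          refine ⟨hp, hsub.trans ?_⟩
          exact union_subset_union
            (union_subset_union (erase_subset _ _) (erase_subset _ _)) (erase_subset _ _)
      · rw [coe_insert]
        exact hT'disj.insert fun t ht _ => hdisjnew t (mem_coe.1 ht)


end Stmt19Aux

/-- A triple of pairwise `ε`-regular pairs of density at least `d > 3ε` contains at
least `(1 - 2ε)L` vertex-disjoint triangles, one vertex in each part. -/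
theorem stmt_19 : ∀ d : ℝ, 0 < d → ∃ ε0 : ℝ, 0 < ε0 ∧
    ∀ ε : ℝ, 0 < ε → ε ≤ ε0 → 3 * ε < d →
    ∃ L0 : ℕ, ∀ L ≥ L0,
    ∀ (V : Type) [Fintype V] [DecidableEq V] (G : SimpleGraph V),
    ∀ [DecidableRel G.Adj], ∀ X : Fin 3 → Finset V,
    (∀ i j, i ≠ j → Disjoint (X i) (X j)) →
    (∀ i, (X i).card = L) →
    (∀ i j, i ≠ j → EpsRegular G ε (X i) (X j) ∧
      (G.edgeDensity (X i) (X j) : ℝ) ≥ d) →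
    ∃ T : Finset (Finset V), ((T.card : ℝ) ≥ (1 - 2 * ε) * L) ∧
      (∀ s ∈ T, G.IsNClique 3 s ∧ ∀ i, (s ∩ X i).card = 1) ∧
      (T : Set (Finset V)).PairwiseDisjoint id := by
  intro d hd
  have hd'0 : 0 < min d 1 := lt_min hd one_pos
  have hd'1 : min d 1 ≤ 1 := min_le_right _ _
  refine ⟨(min d 1) ^ 3 / 100, div_pos (pow_pos hd'0 3) (by norm_num), ?_⟩
  intro ε hε hεle _h3
  refine ⟨⌈(100 : ℝ) / ((min d 1) * ε)⌉₊ + 4, ?_⟩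
  intro L hL V _ _ G _ X hdisjX hcardX hregd
  have hε1 : ε ≤ 1 / 100 := by
    have hcube : (min d 1) ^ 3 ≤ 1 := pow_le_one₀ hd'0.le hd'1
    linarith
  have hLL : ((⌈(100 : ℝ) / ((min d 1) * ε)⌉₊ : ℝ) + 4) ≤ (L : ℝ) := by
    have : ((⌈(100 : ℝ) / ((min d 1) * ε)⌉₊ + 4 : ℕ) : ℝ) ≤ (L : ℝ) := Nat.cast_le.2 hL
    push_cast at this
    linarith
  have hceil : (100 : ℝ) / ((min d 1) * ε) ≤ ⌈(100 : ℝ) / ((min d 1) * ε)⌉₊ := Nat.le_ceil _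
  have hεL : 100 ≤ (min d 1) * (ε * L) := by
    have h1 : (100 : ℝ) / ((min d 1) * ε) ≤ (L : ℝ) := by linarith
    have h2 : (100 : ℝ) ≤ (L : ℝ) * ((min d 1) * ε) :=
      (div_le_iff₀ (by positivity)).1 h1
    linarith [h2]
  have hεLnn : (0 : ℝ) ≤ ε * L := by positivity
  have hεLbig : 100 ≤ ε * (L : ℝ) := by
    nlinarith [mul_le_mul_of_nonneg_right hd'1 hεLnn]
  set K : ℕ := ⌊ε * (L : ℝ)⌋₊ + 1 with hK
  have hK1 : ε * (L : ℝ) < K := by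
    rw [hK]
    push_cast
    exact Nat.lt_floor_add_one _
  have hK2 : (K : ℝ) ≤ ε * L + 1 := by
    rw [hK]
    push_cast
    have := Nat.floor_le hεLnn
    linarith
  have hL4 : (4 : ℝ) ≤ (L : ℝ) := by
    have : (0 : ℝ) ≤ (⌈(100 : ℝ) / ((min d 1) * ε)⌉₊ : ℝ) := Nat.cast_nonneg _
    linarith
  have hKL : 2 * K ≤ L := by
    have hεL2 : ε * (L : ℝ) ≤ (1 / 100) * L :=
      mul_le_mul_of_nonneg_right hε1 (Nat.cast_nonneg _)
    have hfl : ((⌊ε * (L : ℝ)⌋₊ : ℕ) : ℝ) ≤ ε * L := Nat.floor_le hεLnn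
    have hcast : (2 * K : ℝ) ≤ (L : ℝ) := by
      rw [hK]
      push_cast
      linarith
    exact_mod_cast hcast
  obtain ⟨T, hTcard, hTmem, hTdisj⟩ :=
    Stmt19Aux.greedy (G := G) hd hdisjX hcardX hregd hε hεle hεL hK1 hK2 hKL
      L X (fun _ => subset_rfl) hcardX
  refine ⟨T, ?_, fun s hs => (hTmem s hs).1, hTdisj⟩
  have : ((L : ℝ) - 2 * (ε * L)) ≤ T.card := hTcard
  rw [ge_iff_le]
  linarith
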